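/- Let R be a commutative ring and a a nonzero very strongly irreducible element of R. Then the annihilator of a is contained in the Jacobson radical of R. In particular, if J(R) = 0, then a is a regular element (not a zero divisor). -/
import Mathlib


theorem ann_of_very_strongly_irreducible_subset_jacobson {R : Type*} [CommRing R]
    (a : R) (ha0 : a ≠ 0) (hau : ¬IsUnit a)
    (hvsi : ∀ b c : R, a = b * c → IsUnit b ∨ IsUnit c) :
    (∀ c : R, c * a = 0 → c ∈ (⊥ : Ideal R).jacobson) ∧
    ((⊥ : Ideal R).jacobson = ⊥ → ∀ c : R, c * a = 0 → c = 0) := by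
  have main : ∀ c : R, c * a = 0 → c ∈ (⊥ : Ideal R).jacobson := by
    intro c hc
    rw [Ideal.mem_jacobson_bot]
    intro y
    have h : a = (c * y + 1) * a := by rw [add_mul, mul_assoc, mul_comm y a, ← mul_assoc, hc]; ring
    rcases hvsi _ _ h with h1 | h2
    · exact h1
    · exact absurd h2 hau
  refine ⟨main, fun hj c hc => ?_⟩
  have := main c hc
  rw [hj] at this
  simpa using this
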